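/- For a > 0 and y ∈ ℝ, the sum S₁(a,y) := Σ_{n∈ℤ} (n−y)·e^{−a(n−y)²} satisfies |S₁(a,y)| ≤ C·a^{−3/2}·e^{−π²/a} for 0 < a ≤ 1, where C is an absolute constant. -/

import Mathlib

open Real

open HurwitzZeta HurwitzKernelBounds in
private lemma sinKernel_bound (a : ℝ) {t : ℝ} (ht : 1 ≤ t) :
    |sinKernel a t| ≤ 8 * rexp (-π * t) := by
  have ht0 : 0 < t := lt_of_lt_of_le one_pos ht
  have h1 : |sinKernel a t| ≤ 2 * F_nat 1 0 t := by
    rw [← (hasSum_nat_sinKernel a ht0).tsum_eq, ← Real.norm_eq_abs]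
    refine tsum_of_norm_bounded (g := fun n : ℕ ↦ 2 * f_nat 1 0 t n)
      ((summable_f_nat 1 0 ht0).hasSum.mul_left 2) fun n ↦ ?_
    simp only [f_nat, pow_one, add_zero, Real.norm_eq_abs, abs_mul, abs_two, Nat.abs_cast,
      abs_exp]
    have h := abs_sin_le_one (2 * π * a * n)
    nlinarith [mul_nonneg (mul_nonneg (by positivity : (0:ℝ) ≤ 2 * (n:ℝ))
      (exp_pos (-π * (n:ℝ) ^ 2 * t)).le) (sub_nonneg.mpr h)]
  have h2 : ‖F_nat 1 0 t‖ ≤ rexp (-π * (0 ^ 2 + 1) * t) / (1 - rexp (-π * t)) ^ 2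
      + 0 * rexp (-π * 0 ^ 2 * t) / (1 - rexp (-π * t)) := F_nat_one_le le_rfl ht0
  have hexp : rexp (-π * t) ≤ 1 / 2 := by
    have h1' : rexp (-π * t) ≤ rexp (-1) := by
      apply exp_le_exp.mpr
      nlinarith [Real.pi_gt_three]
    refine h1'.trans ?_
    rw [exp_neg, inv_le_comm₀ (exp_pos 1) (by norm_num)]
    norm_num
    linarith [Real.add_one_le_exp 1]
  have hden : (1 : ℝ) / 2 ≤ 1 - rexp (-π * t) := by linarith
  have hF : F_nat 1 0 t ≤ 4 * rexp (-π * t) := by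
    have h3 : rexp (-π * (0 ^ 2 + 1) * t) = rexp (-π * t) := by norm_num
    have h4 : ((1 : ℝ) / 2) ^ 2 ≤ (1 - rexp (-π * t)) ^ 2 := by
      apply pow_le_pow_left₀ (by norm_num) hden
    calc F_nat 1 0 t ≤ ‖F_nat 1 0 t‖ := le_abs_self _
      _ ≤ rexp (-π * t) / (1 - rexp (-π * t)) ^ 2 := by
          rw [h3] at h2; simpa using h2
      _ ≤ rexp (-π * t) / ((1 : ℝ) / 2) ^ 2 := by
          apply div_le_div_of_nonneg_left (exp_pos _).le (by positivity) h4
      _ = 4 * rexp (-π * t) := by ring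
  linarith

/-- The odd Gaussian sum `S₁(a,y) = Σ_{n∈ℤ} (n−y) e^{−a(n−y)²}` is exponentially small:
`|S₁(a,y)| ≤ C a^{−3/2} e^{−π²/a}` for `0 < a ≤ 1`, with an absolute constant `C`. -/
theorem gaussian_odd_sum_small :
    ∃ C > 0, ∀ a y : ℝ, 0 < a → a ≤ 1 →
      |∑' n : ℤ, ((n : ℝ) - y) * Real.exp (-a * ((n : ℝ) - y) ^ 2)|
        ≤ C * a ^ (-(3 : ℝ) / 2) * Real.exp (-π ^ 2 / a) := by
  refine ⟨8 * π ^ (3 / 2 : ℝ), by positivity, fun a y ha ha1 ↦ ?_⟩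
  have hπ : (0 : ℝ) < π := Real.pi_pos
  have hx : 0 < a / π := div_pos ha hπ
  -- identify the sum with the odd Hurwitz kernel
  have hsum := HurwitzZeta.hasSum_int_oddKernel (-y) hx
  have h1 : ∑' n : ℤ, ((n : ℝ) - y) * Real.exp (-a * ((n : ℝ) - y) ^ 2)
      = HurwitzZeta.oddKernel (↑(-y)) (a / π) := by
    rw [← hsum.tsum_eq]
    congr 1; funext n
    rw [← sub_eq_add_neg]
    congr 2
    field_simp
  rw [h1, HurwitzZeta.oddKernel_functional_equation, one_div_div, abs_mul]
  have ht : (1 : ℝ) ≤ π / a := by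
    rw [le_div_iff₀ ha]; nlinarith [Real.pi_gt_three]
  have hbound := sinKernel_bound (-y) ht
  have hxr : |1 / (a / π) ^ (3 / 2 : ℝ)| = π ^ (3 / 2 : ℝ) * a ^ (-(3 : ℝ) / 2) := by
    rw [abs_of_nonneg (by positivity), Real.div_rpow ha.le hπ.le, one_div, inv_div,
      div_eq_mul_inv, ← Real.rpow_neg ha.le]
    norm_num
  rw [hxr]
  have hexp : rexp (-π * (π / a)) = rexp (-π ^ 2 / a) := by
    congr 1; rw [neg_div, neg_mul]; congr 1; rw [sq, mul_div_assoc]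
  calc π ^ (3 / 2 : ℝ) * a ^ (-(3 : ℝ) / 2) * |HurwitzZeta.sinKernel (↑(-y)) (π / a)|
      ≤ π ^ (3 / 2 : ℝ) * a ^ (-(3 : ℝ) / 2) * (8 * rexp (-π * (π / a))) := by
        have hnn : (0:ℝ) ≤ π ^ (3 / 2 : ℝ) * a ^ (-(3 : ℝ) / 2) := by positivity
        exact mul_le_mul_of_nonneg_left hbound hnn
    _ = 8 * π ^ (3 / 2 : ℝ) * a ^ (-(3 : ℝ) / 2) * Real.exp (-π ^ 2 / a) := by
        rw [hexp]; ring
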